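/- Any fully symmetric local distribution for N=3 outcomes with s112 = 0 must satisfy s111 = 1/3 (and hence s123 = 2/3): if a deterministic discrete triangle local model produces a fully symmetric distribution on {R,G,B}³ with no exactly-two-equal outcome events and with both s111 > 0 and s123 > 0, then s111 = 1/3. -/
import Mathlib

def phi3 (i : Fin 3) : ZMod 3 := (i.val : ZMod 3)
def psi3 (j : ZMod 3) : Fin 3 := ⟨j.val, ZMod.val_lt j⟩

lemma phi_psi : ∀ j, phi3 (psi3 j) = j := by decide
lemma phi_inj : ∀ x y : Fin 3, phi3 x = phi3 y → x = y := by decide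
lemma cases3 : ∀ j : ZMod 3, j = 0 ∨ j = 1 ∨ j = 2 := by decide

lemma sum3 {M : Type*} [AddCommMonoid M] (f : ZMod 3 → M) : ∑ j, f j = f 0 + f 1 + f 2 :=
  Fin.sum_univ_three f

lemma not_ete : ∀ x y z : Fin 3,
    ¬ ((x = y ∧ x ≠ z) ∨ (x = z ∧ x ≠ y) ∨ (y = z ∧ y ≠ x)) →
    phi3 x + phi3 y + phi3 z = 0 := by decide

lemma neg3 : ∀ x : ZMod 3, -x - x = x := by decide

lemma pull_const {B C : Type*} [Fintype B] [Fintype C] (a : ℝ) (f : B → C → ℝ) :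
    ∑ β, ∑ γ, a * f β γ = a * ∑ β, ∑ γ, f β γ := by
  simp [Finset.mul_sum]

lemma wcongr3 {wa wb wc : ℝ} (ha : 0 ≤ wa) (hb : 0 ≤ wb) (hc : 0 ≤ wc)
    {P Q : Prop} [Decidable P] [Decidable Q]
    (h : 0 < wa → 0 < wb → 0 < wc → (P ↔ Q)) :
    wa * wb * wc * (if P then (1:ℝ) else 0) = wa * wb * wc * (if Q then 1 else 0) := by
  rcases ha.lt_or_eq with ha' | ha'
  · rcases hb.lt_or_eq with hb' | hb'
    · rcases hc.lt_or_eq with hc' | hc'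
      · rw [if_congr (h ha' hb' hc') rfl rfl]
      · rw [← hc']; ring
    · rw [← hb']; ring
  · rw [← ha']; ring

lemma wcongr2 {wa wb : ℝ} (ha : 0 ≤ wa) (hb : 0 ≤ wb)
    {P Q : Prop} [Decidable P] [Decidable Q]
    (h : 0 < wa → 0 < wb → (P ↔ Q)) :
    wa * wb * (if P then (1:ℝ) else 0) = wa * wb * (if Q then 1 else 0) := by
  rcases ha.lt_or_eq with ha' | ha'
  · rcases hb.lt_or_eq with hb' | hb'
    · rw [if_congr (h ha' hb') rfl rfl]
    · rw [← hb']; ring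
  · rw [← ha']; ring

lemma sum_swap4 {X A B C : Type*} [Fintype X] [Fintype A] [Fintype B] [Fintype C]
    (F : X → A → B → C → ℝ) :
    ∑ y, ∑ α, ∑ β, ∑ γ, F y α β γ = ∑ α, ∑ β, ∑ γ, ∑ y, F y α β γ :=
  calc ∑ y, ∑ α, ∑ β, ∑ γ, F y α β γ
      = ∑ α, ∑ y, ∑ β, ∑ γ, F y α β γ := Finset.sum_comm
    _ = ∑ α, ∑ β, ∑ y, ∑ γ, F y α β γ := Finset.sum_congr rfl fun α _ => Finset.sum_comm
    _ = ∑ α, ∑ β, ∑ γ, ∑ y, F y α β γ :=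
        Finset.sum_congr rfl fun α _ => Finset.sum_congr rfl fun β _ => Finset.sum_comm

lemma margX (P : Prop) [Decidable P] (u v : Fin 3) :
    ∑ y : Fin 3, ∑ z : Fin 3, (if P ∧ u = y ∧ v = z then (1:ℝ) else 0) = if P then 1 else 0 := by
  simp [ite_and]

lemma margY (P : Prop) [Decidable P] (u v : Fin 3) :
    ∑ x : Fin 3, ∑ z : Fin 3, (if u = x ∧ P ∧ v = z then (1:ℝ) else 0) = if P then 1 else 0 := by
  simp [ite_and]

lemma margZ (P : Prop) [Decidable P] (u v : Fin 3) :
    ∑ x : Fin 3, ∑ y : Fin 3, (if u = x ∧ v = y ∧ P then (1:ℝ) else 0) = if P then 1 else 0 := by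
  simp [ite_and]

lemma margT (u v w : Fin 3) :
    ∑ x : Fin 3, ∑ y : Fin 3, ∑ z : Fin 3, (if u = x ∧ v = y ∧ w = z then (1:ℝ) else 0) = 1 := by
  simp [ite_and]

set_option maxHeartbeats 1000000 in
lemma conv_unif (q0 q1 q2 r0 r1 r2 : ℝ)
    (hq : q0 + q1 + q2 = 1) (hr : r0 + r1 + r2 = 1)
    (h0 : q0*r0 + q1*r2 + q2*r1 = 1/3)
    (h1 : q0*r1 + q1*r0 + q2*r2 = 1/3)
    (h2 : q0*r2 + q1*r1 + q2*r0 = 1/3) :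
    (q0 = 1/3 ∧ q1 = 1/3 ∧ q2 = 1/3) ∨ (r0 = 1/3 ∧ r1 = 1/3 ∧ r2 = 1/3) := by
  obtain ⟨a0, ha0⟩ : ∃ a, a = q0 - 1/3 := ⟨_, rfl⟩
  obtain ⟨a1, ha1⟩ : ∃ a, a = q1 - 1/3 := ⟨_, rfl⟩
  obtain ⟨a2, ha2⟩ : ∃ a, a = q2 - 1/3 := ⟨_, rfl⟩
  obtain ⟨b0, hb0⟩ : ∃ a, a = r0 - 1/3 := ⟨_, rfl⟩
  obtain ⟨b1, hb1⟩ : ∃ a, a = r1 - 1/3 := ⟨_, rfl⟩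
  obtain ⟨b2, hb2⟩ : ∃ a, a = r2 - 1/3 := ⟨_, rfl⟩
  have hsa : a0 + a1 + a2 = 0 := by rw [ha0, ha1, ha2]; linarith
  have hsb : b0 + b1 + b2 = 0 := by rw [hb0, hb1, hb2]; linarith
  have e0 : a0*b0 + a1*b2 + a2*b1 = 0 := by
    rw [ha0, ha1, ha2, hb0, hb1, hb2]; linear_combination h0 - (1/3)*hq - (1/3)*hr
  have e1 : a0*b1 + a1*b0 + a2*b2 = 0 := by
    rw [ha0, ha1, ha2, hb0, hb1, hb2]; linear_combination h1 - (1/3)*hq - (1/3)*hr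
  have e2 : a0*b2 + a1*b1 + a2*b0 = 0 := by
    rw [ha0, ha1, ha2, hb0, hb1, hb2]; linear_combination h2 - (1/3)*hq - (1/3)*hr
  have hN : (a0^2 + a1^2 + a2^2 - a0*a1 - a1*a2 - a2*a0) *
      (b0^2 + b1^2 + b2^2 - b0*b1 - b1*b2 - b2*b0) = 0 := by
    linear_combination ((a0*b0 + a1*b2 + a2*b1) - (a0*b1 + a1*b0 + a2*b2)) * e0
      + ((a0*b1 + a1*b0 + a2*b2) - (a0*b2 + a1*b1 + a2*b0)) * e1
      + ((a0*b2 + a1*b1 + a2*b0) - (a0*b0 + a1*b2 + a2*b1)) * e2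
  have sqz : ∀ x : ℝ, x^2 = 0 → x = 0 := fun x hx => by nlinarith [sq_nonneg x]
  rcases mul_eq_zero.mp hN with h | h
  · left
    have hss : a0^2 + a1^2 + a2^2 = 0 := by linear_combination (2/3)*h + (1/3)*(a0+a1+a2)*hsa
    have z0 : a0 = 0 := sqz _ (by linarith [sq_nonneg a0, sq_nonneg a1, sq_nonneg a2, hss])
    have z1 : a1 = 0 := sqz _ (by linarith [sq_nonneg a0, sq_nonneg a1, sq_nonneg a2, hss])
    have z2 : a2 = 0 := sqz _ (by linarith [sq_nonneg a0, sq_nonneg a1, sq_nonneg a2, hss])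
    rw [z0] at ha0; rw [z1] at ha1; rw [z2] at ha2
    exact ⟨by linarith, by linarith, by linarith⟩
  · right
    have hss : b0^2 + b1^2 + b2^2 = 0 := by linear_combination (2/3)*h + (1/3)*(b0+b1+b2)*hsb
    have z0 : b0 = 0 := sqz _ (by linarith [sq_nonneg b0, sq_nonneg b1, sq_nonneg b2, hss])
    have z1 : b1 = 0 := sqz _ (by linarith [sq_nonneg b0, sq_nonneg b1, sq_nonneg b2, hss])
    have z2 : b2 = 0 := sqz _ (by linarith [sq_nonneg b0, sq_nonneg b1, sq_nonneg b2, hss])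
    rw [z0] at hb0; rw [z1] at hb1; rw [z2] at hb2
    exact ⟨by linarith, by linarith, by linarith⟩

lemma fact3 {A B C : Type*} [Fintype A] [Fintype B] [Fintype C]
    (f : A → ℝ) (g : B → ℝ) (h : C → ℝ) :
    ∑ α, ∑ β, ∑ γ, f α * g β * h γ = (∑ α, f α) * (∑ β, g β) * (∑ γ, h γ) := by
  rw [Finset.sum_mul_sum, Finset.sum_mul]
  refine Finset.sum_congr rfl fun α _ => ?_
  rw [Finset.sum_mul_sum]

lemma fact2 {B C : Type*} [Fintype B] [Fintype C] (g : B → ℝ) (h : C → ℝ) :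
    ∑ β, ∑ γ, g β * h γ = (∑ β, g β) * (∑ γ, h γ) := (Finset.sum_mul_sum _ _ _ _).symm

lemma key_ind (u v w : ZMod 3) (g h : ZMod 3 → ZMod 3) :
    (if u = g v ∧ w = h v then (1:ℝ) else 0)
    = ∑ t : ZMod 3, (if v = t then 1 else 0) * ((if u = g t then 1 else 0) * (if w = h t then 1 else 0)) := by
  have : ∀ t : ZMod 3, (if v = t then (1:ℝ) else 0) * ((if u = g t then 1 else 0) * (if w = h t then 1 else 0))
      = if v = t then ((if u = g t then 1 else 0) * (if w = h t then 1 else 0)) else 0 := by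
    intro t; split_ifs <;> norm_num
  rw [Finset.sum_congr rfl fun t _ => this t, Finset.sum_ite_eq]
  simp only [Finset.mem_univ, if_true]
  split_ifs with h1 h2 h3 <;> norm_num <;> tauto

lemma key_ind2 (u v : ZMod 3) (g : ZMod 3 → ZMod 3) :
    (if u = g v then (1:ℝ) else 0)
    = ∑ t : ZMod 3, (if v = t then 1 else 0) * (if u = g t then 1 else 0) := by
  have : ∀ t : ZMod 3, (if v = t then (1:ℝ) else 0) * (if u = g t then 1 else 0)
      = if v = t then (if u = g t then (1:ℝ) else 0) else 0 := by
    intro t; split_ifs <;> norm_num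
  rw [Finset.sum_congr rfl fun t _ => this t, Finset.sum_ite_eq]
  simp

lemma ind_split3 {A B C : Type*} [Fintype A] [Fintype B] [Fintype C]
    (wA : A → ℝ) (wB : B → ℝ) (wC : C → ℝ)
    (W : A → ZMod 3) (U : B → ZMod 3) (V : C → ZMod 3) (g h : ZMod 3 → ZMod 3) :
    ∑ α, ∑ β, ∑ γ, wA α * wB β * wC γ * (if U β = g (V γ) ∧ W α = h (V γ) then 1 else 0)
    = ∑ t : ZMod 3, (∑ γ, wC γ * (if V γ = t then 1 else 0)) *
        ((∑ β, wB β * (if U β = g t then 1 else 0)) * (∑ α, wA α * (if W α = h t then 1 else 0))) := by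
  have step1 : ∀ α β γ, wA α * wB β * wC γ * (if U β = g (V γ) ∧ W α = h (V γ) then (1:ℝ) else 0)
      = ∑ t : ZMod 3, (wC γ * (if V γ = t then 1 else 0)) *
          ((wB β * (if U β = g t then 1 else 0)) * (wA α * (if W α = h t then 1 else 0))) := by
    intro α β γ
    rw [key_ind (U β) (V γ) (W α) g h, Finset.mul_sum]
    exact Finset.sum_congr rfl fun t _ => by ring
  calc ∑ α, ∑ β, ∑ γ, wA α * wB β * wC γ * (if U β = g (V γ) ∧ W α = h (V γ) then (1:ℝ) else 0)
      = ∑ α, ∑ β, ∑ γ, ∑ t : ZMod 3, (wC γ * (if V γ = t then 1 else 0)) *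
          ((wB β * (if U β = g t then 1 else 0)) * (wA α * (if W α = h t then 1 else 0))) := by
        exact Finset.sum_congr rfl fun α _ => Finset.sum_congr rfl fun β _ =>
          Finset.sum_congr rfl fun γ _ => step1 α β γ
    _ = ∑ t : ZMod 3, ∑ α, ∑ β, ∑ γ, (wC γ * (if V γ = t then 1 else 0)) *
          ((wB β * (if U β = g t then 1 else 0)) * (wA α * (if W α = h t then 1 else 0))) := by
        calc ∑ α, ∑ β, ∑ γ, ∑ t : ZMod 3, (wC γ * (if V γ = t then (1:ℝ) else 0)) *
              ((wB β * (if U β = g t then 1 else 0)) * (wA α * (if W α = h t then 1 else 0)))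
            = ∑ α, ∑ β, ∑ t : ZMod 3, ∑ γ, (wC γ * (if V γ = t then (1:ℝ) else 0)) *
              ((wB β * (if U β = g t then 1 else 0)) * (wA α * (if W α = h t then 1 else 0))) :=
              Finset.sum_congr rfl fun α _ => Finset.sum_congr rfl fun β _ => Finset.sum_comm
          _ = ∑ α, ∑ t : ZMod 3, ∑ β, ∑ γ, (wC γ * (if V γ = t then (1:ℝ) else 0)) *
              ((wB β * (if U β = g t then 1 else 0)) * (wA α * (if W α = h t then 1 else 0))) :=
              Finset.sum_congr rfl fun α _ => Finset.sum_comm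
          _ = _ := Finset.sum_comm
    _ = ∑ t : ZMod 3, (∑ γ, wC γ * (if V γ = t then 1 else 0)) *
        ((∑ β, wB β * (if U β = g t then 1 else 0)) * (∑ α, wA α * (if W α = h t then 1 else 0))) := by
        refine Finset.sum_congr rfl fun t _ => ?_
        have := fact3 (fun α => wA α * (if W α = h t then (1:ℝ) else 0))
          (fun β => wB β * (if U β = g t then (1:ℝ) else 0))
          (fun γ => wC γ * (if V γ = t then (1:ℝ) else 0))
        calc ∑ α, ∑ β, ∑ γ, (wC γ * (if V γ = t then (1:ℝ) else 0)) *
              ((wB β * (if U β = g t then 1 else 0)) * (wA α * (if W α = h t then 1 else 0)))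
            = ∑ α, ∑ β, ∑ γ, (wA α * (if W α = h t then (1:ℝ) else 0)) *
              (wB β * (if U β = g t then 1 else 0)) * (wC γ * (if V γ = t then 1 else 0)) := by
              exact Finset.sum_congr rfl fun α _ => Finset.sum_congr rfl fun β _ =>
                Finset.sum_congr rfl fun γ _ => by ring
          _ = _ := by rw [this]; ring

lemma ind_split2 {B C : Type*} [Fintype B] [Fintype C]
    (wB : B → ℝ) (wC : C → ℝ)
    (U : B → ZMod 3) (V : C → ZMod 3) (g : ZMod 3 → ZMod 3) :
    ∑ β, ∑ γ, wB β * wC γ * (if U β = g (V γ) then 1 else 0)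
    = ∑ t : ZMod 3, (∑ γ, wC γ * (if V γ = t then 1 else 0)) *
        (∑ β, wB β * (if U β = g t then 1 else 0)) := by
  have step1 : ∀ β γ, wB β * wC γ * (if U β = g (V γ) then (1:ℝ) else 0)
      = ∑ t : ZMod 3, (wC γ * (if V γ = t then 1 else 0)) * (wB β * (if U β = g t then 1 else 0)) := by
    intro β γ
    rw [key_ind2 (U β) (V γ) g, Finset.mul_sum]
    exact Finset.sum_congr rfl fun t _ => by ring
  calc ∑ β, ∑ γ, wB β * wC γ * (if U β = g (V γ) then (1:ℝ) else 0)
      = ∑ β, ∑ γ, ∑ t : ZMod 3, (wC γ * (if V γ = t then 1 else 0)) *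
          (wB β * (if U β = g t then 1 else 0)) :=
        Finset.sum_congr rfl fun β _ => Finset.sum_congr rfl fun γ _ => step1 β γ
    _ = ∑ β, ∑ t : ZMod 3, ∑ γ, (wC γ * (if V γ = t then 1 else 0)) *
          (wB β * (if U β = g t then 1 else 0)) :=
        Finset.sum_congr rfl fun β _ => Finset.sum_comm
    _ = ∑ t : ZMod 3, ∑ β, ∑ γ, (wC γ * (if V γ = t then 1 else 0)) *
          (wB β * (if U β = g t then 1 else 0)) := Finset.sum_comm
    _ = ∑ t : ZMod 3, (∑ γ, wC γ * (if V γ = t then 1 else 0)) *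
        (∑ β, wB β * (if U β = g t then 1 else 0)) := by
        refine Finset.sum_congr rfl fun t _ => ?_
        rw [← fact2 (fun γ => wC γ * (if V γ = t then (1:ℝ) else 0))
          (fun β => wB β * (if U β = g t then (1:ℝ) else 0))]
        exact Finset.sum_comm

/-- Exactly two of the three colors are equal. -/
def ExactlyTwoEqual (x y z : Fin 3) : Prop :=
  (x = y ∧ x ≠ z) ∨ (x = z ∧ x ≠ y) ∨ (y = z ∧ y ≠ x)

set_option maxHeartbeats 1000000 in
/-- A deterministic discrete triangle local model for 3 outcomes
whose output distribution is fully symmetric, has no exactly-two-equal events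
(s112 = 0), and has s111 > 0 and s123 > 0, must satisfy s111 = 1/3. -/
theorem stmt_19 {A B C : Type*} [Fintype A] [Fintype B] [Fintype C]
    (wA : A → ℝ) (wB : B → ℝ) (wC : C → ℝ)
    (hwA : (∀ α, 0 ≤ wA α) ∧ ∑ α, wA α = 1)
    (hwB : (∀ β, 0 ≤ wB β) ∧ ∑ β, wB β = 1)
    (hwC : (∀ γ, 0 ≤ wC γ) ∧ ∑ γ, wC γ = 1)
    (fa : B → C → Fin 3) (fb : C → A → Fin 3) (fc : A → B → Fin 3)
    (p : Fin 3 → Fin 3 → Fin 3 → ℝ)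
    (hp : ∀ x y z, p x y z = ∑ α, ∑ β, ∑ γ,
      wA α * wB β * wC γ *
        (if fa β γ = x ∧ fb γ α = y ∧ fc α β = z then 1 else 0))
    (hparty : ∀ x y z, p x y z = p y x z ∧ p x y z = p x z y)
    (houtcome : ∀ (σ : Equiv.Perm (Fin 3)) x y z, p (σ x) (σ y) (σ z) = p x y z)
    (hs112 : ∀ x y z, ExactlyTwoEqual x y z → p x y z = 0)
    (hs111 : 0 < ∑ k : Fin 3, p k k k)
    (hs123 : 0 < ∑ x : Fin 3, ∑ y : Fin 3, ∑ z : Fin 3,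
      (if x ≠ y ∧ y ≠ z ∧ x ≠ z then p x y z else 0)) :
    ∑ k : Fin 3, p k k k = 1 / 3 := by
  obtain ⟨hA0, hAs⟩ := hwA
  obtain ⟨hB0, hBs⟩ := hwB
  obtain ⟨hC0, hCs⟩ := hwC
  -- positive hidden variables exist
  have exA : ∃ α, 0 < wA α := by
    by_contra h
    push_neg at h
    have h0 : ∑ α, wA α = 0 := Finset.sum_eq_zero fun α _ => le_antisymm (h α) (hA0 α)
    rw [hAs] at h0; norm_num at h0
  have exB : ∃ β, 0 < wB β := by
    by_contra h
    push_neg at h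
    have h0 : ∑ β, wB β = 0 := Finset.sum_eq_zero fun β _ => le_antisymm (h β) (hB0 β)
    rw [hBs] at h0; norm_num at h0
  have exC : ∃ γ, 0 < wC γ := by
    by_contra h
    push_neg at h
    have h0 : ∑ γ, wC γ = 0 := Finset.sum_eq_zero fun γ _ => le_antisymm (h γ) (hC0 γ)
    rw [hCs] at h0; norm_num at h0
  obtain ⟨α0, hα0⟩ := exA
  obtain ⟨β0, hβ0⟩ := exB
  obtain ⟨γ0, hγ0⟩ := exC
  -- the key mod-3 constraint on response functions
  have key : ∀ α β γ, 0 < wA α → 0 < wB β → 0 < wC γ →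
      phi3 (fa β γ) + phi3 (fb γ α) + phi3 (fc α β) = 0 := by
    intro α β γ ha hb hc
    have nn : ∀ (α' : A) (β' : B) (γ' : C),
        0 ≤ wA α' * wB β' * wC γ' *
          (if fa β' γ' = fa β γ ∧ fb γ' α' = fb γ α ∧ fc α' β' = fc α β then (1:ℝ) else 0) := by
      intro α' β' γ'
      apply mul_nonneg (mul_nonneg (mul_nonneg (hA0 _) (hB0 _)) (hC0 _))
      split_ifs <;> norm_num
    have hterm : wA α * wB β * wC γ ≤ p (fa β γ) (fb γ α) (fc α β) := by
      rw [hp]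
      calc wA α * wB β * wC γ
          = wA α * wB β * wC γ *
            (if fa β γ = fa β γ ∧ fb γ α = fb γ α ∧ fc α β = fc α β then (1:ℝ) else 0) := by simp
        _ ≤ ∑ γ', wA α * wB β * wC γ' *
            (if fa β γ' = fa β γ ∧ fb γ' α = fb γ α ∧ fc α β = fc α β then (1:ℝ) else 0) := by
            exact Finset.single_le_sum (fun γ' _ => nn α β γ') (Finset.mem_univ γ)
        _ ≤ ∑ β', ∑ γ', wA α * wB β' * wC γ' *
            (if fa β' γ' = fa β γ ∧ fb γ' α = fb γ α ∧ fc α β' = fc α β then (1:ℝ) else 0) := by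
            exact Finset.single_le_sum
              (fun β' _ => Finset.sum_nonneg fun γ' _ => nn α β' γ') (Finset.mem_univ β)
        _ ≤ ∑ α', ∑ β', ∑ γ', wA α' * wB β' * wC γ' *
            (if fa β' γ' = fa β γ ∧ fb γ' α' = fb γ α ∧ fc α' β' = fc α β then (1:ℝ) else 0) := by
            exact Finset.single_le_sum
              (fun α' _ => Finset.sum_nonneg fun β' _ => Finset.sum_nonneg fun γ' _ => nn α' β' γ')
              (Finset.mem_univ α)
    have hposw : 0 < wA α * wB β * wC γ := by positivity
    have hne : ¬ ExactlyTwoEqual (fa β γ) (fb γ α) (fc α β) := by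
      intro hE
      have h0 := hs112 _ _ _ hE
      rw [h0] at hterm; linarith
    exact not_ete _ _ _ hne
  -- structural functions
  set U : B → ZMod 3 := fun β => -phi3 (fc α0 β) with hUdef
  set V : C → ZMod 3 := fun γ => -phi3 (fb γ α0) with hVdef
  set W : A → ZMod 3 := fun α => phi3 (fc α β0) with hWdef
  set c0 : ZMod 3 := U β0 with hc0def
  have hfa : ∀ β γ, 0 < wB β → 0 < wC γ → phi3 (fa β γ) = U β + V γ := by
    intro β γ hb hc
    have hk := key α0 β γ hα0 hb hc
    simp only [hUdef, hVdef]
    linear_combination hk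
  have hfb : ∀ γ α, 0 < wC γ → 0 < wA α → phi3 (fb γ α) = -c0 - V γ - W α := by
    intro γ α hc ha
    have hk := key α β0 γ ha hβ0 hc
    have h2 := hfa β0 γ hβ0 hc
    simp only [hUdef, hVdef, hWdef, hc0def] at *
    linear_combination hk - h2
  have hfc : ∀ α β, 0 < wA α → 0 < wB β → phi3 (fc α β) = c0 - U β + W α := by
    intro α β ha hb
    have hk := key α β γ0 ha hb hγ0
    have h2 := hfa β γ0 hb hγ0
    have h3 := hfb γ0 α hγ0 ha
    simp only [hUdef, hVdef, hWdef, hc0def] at *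
    linear_combination hk - h2 - h3
  -- distributions of the structural labels
  set qA : ZMod 3 → ℝ := fun j => ∑ α, wA α * (if W α = j then 1 else 0) with hqAdef
  set qB : ZMod 3 → ℝ := fun j => ∑ β, wB β * (if U β = j then 1 else 0) with hqBdef
  set qC : ZMod 3 → ℝ := fun j => ∑ γ, wC γ * (if V γ = j then 1 else 0) with hqCdef
  have hqAs : qA 0 + qA 1 + qA 2 = 1 := by
    rw [← sum3 qA]
    simp only [hqAdef]
    rw [Finset.sum_comm]
    calc ∑ α, ∑ j : ZMod 3, wA α * (if W α = j then (1:ℝ) else 0)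
        = ∑ α, wA α := Finset.sum_congr rfl fun α _ => by
          rw [← Finset.mul_sum]; simp [Finset.sum_ite_eq]
      _ = 1 := hAs
  have hqBs : qB 0 + qB 1 + qB 2 = 1 := by
    rw [← sum3 qB]
    simp only [hqBdef]
    rw [Finset.sum_comm]
    calc ∑ β, ∑ j : ZMod 3, wB β * (if U β = j then (1:ℝ) else 0)
        = ∑ β, wB β := Finset.sum_congr rfl fun β _ => by
          rw [← Finset.mul_sum]; simp [Finset.sum_ite_eq]
      _ = 1 := hBs
  have hqCs : qC 0 + qC 1 + qC 2 = 1 := by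
    rw [← sum3 qC]
    simp only [hqCdef]
    rw [Finset.sum_comm]
    calc ∑ γ, ∑ j : ZMod 3, wC γ * (if V γ = j then (1:ℝ) else 0)
        = ∑ γ, wC γ := Finset.sum_congr rfl fun γ _ => by
          rw [← Finset.mul_sum]; simp [Finset.sum_ite_eq]
      _ = 1 := hCs
  -- p on the diagonal in terms of q's
  have hdiag : ∀ k : Fin 3, p k k k
      = ∑ t : ZMod 3, qC t * (qB (phi3 k - t) * qA (-c0 - t - phi3 k)) := by
    intro k
    rw [hp]
    have step : ∀ α β γ, wA α * wB β * wC γ *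
        (if fa β γ = k ∧ fb γ α = k ∧ fc α β = k then (1:ℝ) else 0)
        = wA α * wB β * wC γ *
        (if U β = phi3 k - V γ ∧ W α = -c0 - V γ - phi3 k then (1:ℝ) else 0) := by
      intro α β γ
      apply wcongr3 (hA0 α) (hB0 β) (hC0 γ)
      intro ha hb hc
      constructor
      · rintro ⟨e1, e2, e3⟩
        have t1 := hfa β γ hb hc
        rw [e1] at t1
        have t2 := hfb γ α hc ha
        rw [e2] at t2
        exact ⟨by linear_combination -t1, by linear_combination t2⟩
      · rintro ⟨e1, e2⟩
        have k1 : phi3 (fa β γ) = phi3 k := by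
          rw [hfa β γ hb hc]; linear_combination e1
        have k2 : phi3 (fb γ α) = phi3 k := by
          rw [hfb γ α hc ha]; linear_combination -e2
        have k3 : phi3 (fc α β) = phi3 k := by
          have hk := key α β γ ha hb hc
          have : phi3 (fc α β) = -phi3 k - phi3 k := by linear_combination hk - k1 - k2
          rw [this, neg3]
        exact ⟨phi_inj _ _ k1, phi_inj _ _ k2, phi_inj _ _ k3⟩
    rw [Finset.sum_congr rfl fun α _ => Finset.sum_congr rfl fun β _ =>
      Finset.sum_congr rfl fun γ _ => step α β γ]
    simp only [hqAdef, hqBdef, hqCdef]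
    exact ind_split3 wA wB wC W U V (fun t => phi3 k - t) (fun t => -c0 - t - phi3 k)
  -- marginal of X
  have mX : ∀ x : Fin 3, ∑ y : Fin 3, ∑ z : Fin 3, p x y z
      = ∑ t : ZMod 3, qC t * qB (phi3 x - t) := by
    intro x
    simp only [hp]
    calc ∑ y : Fin 3, ∑ z : Fin 3, ∑ α, ∑ β, ∑ γ, wA α * wB β * wC γ *
          (if fa β γ = x ∧ fb γ α = y ∧ fc α β = z then (1:ℝ) else 0)
        = ∑ y : Fin 3, ∑ α, ∑ β, ∑ γ, ∑ z : Fin 3, wA α * wB β * wC γ *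
          (if fa β γ = x ∧ fb γ α = y ∧ fc α β = z then (1:ℝ) else 0) :=
          Finset.sum_congr rfl fun y _ => sum_swap4 _
      _ = ∑ α, ∑ β, ∑ γ, ∑ y : Fin 3, ∑ z : Fin 3, wA α * wB β * wC γ *
          (if fa β γ = x ∧ fb γ α = y ∧ fc α β = z then (1:ℝ) else 0) := sum_swap4 _
      _ = ∑ α, ∑ β, ∑ γ, wA α * wB β * wC γ * (if fa β γ = x then (1:ℝ) else 0) := by
          refine Finset.sum_congr rfl fun α _ => Finset.sum_congr rfl fun β _ =>
            Finset.sum_congr rfl fun γ _ => ?_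
          rw [pull_const (wA α * wB β * wC γ)
            (fun y z => if fa β γ = x ∧ fb γ α = y ∧ fc α β = z then (1:ℝ) else 0)]
          rw [margX (fa β γ = x) (fb γ α) (fc α β)]
      _ = ∑ α, wA α * ∑ β, ∑ γ, wB β * wC γ * (if fa β γ = x then (1:ℝ) else 0) := by
          refine Finset.sum_congr rfl fun α _ => ?_
          rw [Finset.mul_sum]
          refine Finset.sum_congr rfl fun β _ => ?_
          rw [Finset.mul_sum]
          exact Finset.sum_congr rfl fun γ _ => by ring
      _ = ∑ β, ∑ γ, wB β * wC γ * (if fa β γ = x then (1:ℝ) else 0) := by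
          rw [← Finset.sum_mul, hAs, one_mul]
      _ = ∑ β, ∑ γ, wB β * wC γ * (if U β = phi3 x - V γ then (1:ℝ) else 0) := by
          refine Finset.sum_congr rfl fun β _ => Finset.sum_congr rfl fun γ _ => ?_
          apply wcongr2 (hB0 β) (hC0 γ)
          intro hb hc
          constructor
          · intro e
            have t1 := hfa β γ hb hc; rw [e] at t1; linear_combination -t1
          · intro e
            have t1 := hfa β γ hb hc
            have : phi3 (fa β γ) = phi3 x := by rw [t1]; linear_combination e
            exact phi_inj _ _ this
      _ = ∑ t : ZMod 3, qC t * qB (phi3 x - t) := by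
          simp only [hqBdef, hqCdef]
          exact ind_split2 wB wC U V (fun t => phi3 x - t)
  -- marginal of Y
  have mY : ∀ y : Fin 3, ∑ x : Fin 3, ∑ z : Fin 3, p x y z
      = ∑ t : ZMod 3, qC t * qA (-c0 - t - phi3 y) := by
    intro y
    simp only [hp]
    calc ∑ x : Fin 3, ∑ z : Fin 3, ∑ α, ∑ β, ∑ γ, wA α * wB β * wC γ *
          (if fa β γ = x ∧ fb γ α = y ∧ fc α β = z then (1:ℝ) else 0)
        = ∑ x : Fin 3, ∑ α, ∑ β, ∑ γ, ∑ z : Fin 3, wA α * wB β * wC γ *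
          (if fa β γ = x ∧ fb γ α = y ∧ fc α β = z then (1:ℝ) else 0) :=
          Finset.sum_congr rfl fun x _ => sum_swap4 _
      _ = ∑ α, ∑ β, ∑ γ, ∑ x : Fin 3, ∑ z : Fin 3, wA α * wB β * wC γ *
          (if fa β γ = x ∧ fb γ α = y ∧ fc α β = z then (1:ℝ) else 0) := sum_swap4 _
      _ = ∑ α, ∑ β, ∑ γ, wA α * wB β * wC γ * (if fb γ α = y then (1:ℝ) else 0) := by
          refine Finset.sum_congr rfl fun α _ => Finset.sum_congr rfl fun β _ =>
            Finset.sum_congr rfl fun γ _ => ?_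
          rw [pull_const (wA α * wB β * wC γ)
            (fun x z => if fa β γ = x ∧ fb γ α = y ∧ fc α β = z then (1:ℝ) else 0)]
          rw [margY (fb γ α = y) (fa β γ) (fc α β)]
      _ = ∑ α, ∑ β, wB β * ∑ γ, wA α * wC γ * (if fb γ α = y then (1:ℝ) else 0) := by
          refine Finset.sum_congr rfl fun α _ => Finset.sum_congr rfl fun β _ => ?_
          rw [Finset.mul_sum]
          exact Finset.sum_congr rfl fun γ _ => by ring
      _ = ∑ α, ∑ γ, wA α * wC γ * (if fb γ α = y then (1:ℝ) else 0) := by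
          refine Finset.sum_congr rfl fun α _ => ?_
          rw [← Finset.sum_mul, hBs, one_mul]
      _ = ∑ α, ∑ γ, wA α * wC γ * (if W α = -c0 - V γ - phi3 y then (1:ℝ) else 0) := by
          refine Finset.sum_congr rfl fun α _ => Finset.sum_congr rfl fun γ _ => ?_
          apply wcongr2 (hA0 α) (hC0 γ)
          intro ha hc
          constructor
          · intro e
            have t1 := hfb γ α hc ha; rw [e] at t1; linear_combination t1
          · intro e
            have t1 := hfb γ α hc ha
            have : phi3 (fb γ α) = phi3 y := by rw [t1]; linear_combination -e
            exact phi_inj _ _ this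
      _ = ∑ t : ZMod 3, qC t * qA (-c0 - t - phi3 y) := by
          simp only [hqAdef, hqCdef]
          exact ind_split2 wA wC W V (fun t => -c0 - t - phi3 y)
  -- marginal of Z
  have mZ : ∀ z : Fin 3, ∑ x : Fin 3, ∑ y : Fin 3, p x y z
      = ∑ t : ZMod 3, qB t * qA (phi3 z - c0 + t) := by
    intro z
    simp only [hp]
    calc ∑ x : Fin 3, ∑ y : Fin 3, ∑ α, ∑ β, ∑ γ, wA α * wB β * wC γ *
          (if fa β γ = x ∧ fb γ α = y ∧ fc α β = z then (1:ℝ) else 0)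
        = ∑ x : Fin 3, ∑ α, ∑ β, ∑ γ, ∑ y : Fin 3, wA α * wB β * wC γ *
          (if fa β γ = x ∧ fb γ α = y ∧ fc α β = z then (1:ℝ) else 0) :=
          Finset.sum_congr rfl fun x _ => sum_swap4 _
      _ = ∑ α, ∑ β, ∑ γ, ∑ x : Fin 3, ∑ y : Fin 3, wA α * wB β * wC γ *
          (if fa β γ = x ∧ fb γ α = y ∧ fc α β = z then (1:ℝ) else 0) := sum_swap4 _
      _ = ∑ α, ∑ β, ∑ γ, wA α * wB β * wC γ * (if fc α β = z then (1:ℝ) else 0) := by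
          refine Finset.sum_congr rfl fun α _ => Finset.sum_congr rfl fun β _ =>
            Finset.sum_congr rfl fun γ _ => ?_
          rw [pull_const (wA α * wB β * wC γ)
            (fun x y => if fa β γ = x ∧ fb γ α = y ∧ fc α β = z then (1:ℝ) else 0)]
          rw [margZ (fc α β = z) (fa β γ) (fb γ α)]
      _ = ∑ α, ∑ β, (wA α * wB β * (if fc α β = z then (1:ℝ) else 0)) * ∑ γ, wC γ := by
          refine Finset.sum_congr rfl fun α _ => Finset.sum_congr rfl fun β _ => ?_
          rw [Finset.mul_sum]
          exact Finset.sum_congr rfl fun γ _ => by ring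
      _ = ∑ α, ∑ β, wA α * wB β * (if fc α β = z then (1:ℝ) else 0) := by
          refine Finset.sum_congr rfl fun α _ => Finset.sum_congr rfl fun β _ => ?_
          rw [hCs, mul_one]
      _ = ∑ α, ∑ β, wA α * wB β * (if W α = phi3 z - c0 + U β then (1:ℝ) else 0) := by
          refine Finset.sum_congr rfl fun α _ => Finset.sum_congr rfl fun β _ => ?_
          apply wcongr2 (hA0 α) (hB0 β)
          intro ha hb
          constructor
          · intro e
            have t1 := hfc α β ha hb; rw [e] at t1; linear_combination -t1
          · intro e
            have t1 := hfc α β ha hb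
            have : phi3 (fc α β) = phi3 z := by rw [t1]; linear_combination e
            exact phi_inj _ _ this
      _ = ∑ t : ZMod 3, qB t * qA (phi3 z - c0 + t) := by
          simp only [hqAdef, hqBdef]
          exact ind_split2 wA wB W U (fun t => phi3 z - c0 + t)
  -- total sum is 1
  have tot : ∑ x : Fin 3, ∑ y : Fin 3, ∑ z : Fin 3, p x y z = 1 := by
    simp only [hp]
    calc ∑ x : Fin 3, ∑ y : Fin 3, ∑ z : Fin 3, ∑ α, ∑ β, ∑ γ, wA α * wB β * wC γ *
          (if fa β γ = x ∧ fb γ α = y ∧ fc α β = z then (1:ℝ) else 0)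
        = ∑ x : Fin 3, ∑ y : Fin 3, ∑ α, ∑ β, ∑ γ, ∑ z : Fin 3, wA α * wB β * wC γ *
          (if fa β γ = x ∧ fb γ α = y ∧ fc α β = z then (1:ℝ) else 0) :=
          Finset.sum_congr rfl fun x _ => Finset.sum_congr rfl fun y _ => sum_swap4 _
      _ = ∑ x : Fin 3, ∑ α, ∑ β, ∑ γ, ∑ y : Fin 3, ∑ z : Fin 3, wA α * wB β * wC γ *
          (if fa β γ = x ∧ fb γ α = y ∧ fc α β = z then (1:ℝ) else 0) :=
          Finset.sum_congr rfl fun x _ => sum_swap4 _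
      _ = ∑ α, ∑ β, ∑ γ, ∑ x : Fin 3, ∑ y : Fin 3, ∑ z : Fin 3, wA α * wB β * wC γ *
          (if fa β γ = x ∧ fb γ α = y ∧ fc α β = z then (1:ℝ) else 0) := sum_swap4 _
      _ = ∑ α, ∑ β, ∑ γ, wA α * wB β * wC γ := by
          refine Finset.sum_congr rfl fun α _ => Finset.sum_congr rfl fun β _ =>
            Finset.sum_congr rfl fun γ _ => ?_
          calc ∑ x : Fin 3, ∑ y : Fin 3, ∑ z : Fin 3, wA α * wB β * wC γ *
                (if fa β γ = x ∧ fb γ α = y ∧ fc α β = z then (1:ℝ) else 0)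
              = ∑ x : Fin 3, wA α * wB β * wC γ * (∑ y : Fin 3, ∑ z : Fin 3,
                (if fa β γ = x ∧ fb γ α = y ∧ fc α β = z then (1:ℝ) else 0)) :=
                Finset.sum_congr rfl fun x _ => pull_const (wA α * wB β * wC γ)
                  (fun y z => if fa β γ = x ∧ fb γ α = y ∧ fc α β = z then (1:ℝ) else 0)
            _ = ∑ x : Fin 3, wA α * wB β * wC γ * (if fa β γ = x then (1:ℝ) else 0) := by
                refine Finset.sum_congr rfl fun x _ => ?_
                rw [margX (fa β γ = x) (fb γ α) (fc α β)]
            _ = wA α * wB β * wC γ * ∑ x : Fin 3, (if fa β γ = x then (1:ℝ) else 0) := by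
                rw [Finset.mul_sum]
            _ = wA α * wB β * wC γ := by
                rw [Finset.sum_ite_eq]; simp
      _ = 1 := by rw [fact3 wA wB wC, hAs, hBs, hCs]; norm_num
  -- uniform marginals via outcome symmetry
  have uniX : ∀ x : Fin 3, ∑ t : ZMod 3, qC t * qB (phi3 x - t) = 1/3 := by
    have eqm : ∀ x x' : Fin 3, (∑ y : Fin 3, ∑ z : Fin 3, p x y z)
        = ∑ y : Fin 3, ∑ z : Fin 3, p x' y z := by
      intro x x'
      calc ∑ y : Fin 3, ∑ z : Fin 3, p x y z
          = ∑ y : Fin 3, ∑ z : Fin 3,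
              p (Equiv.swap x x' x) (Equiv.swap x x' y) (Equiv.swap x x' z) :=
            Finset.sum_congr rfl fun y _ => Finset.sum_congr rfl fun z _ =>
              (houtcome (Equiv.swap x x') x y z).symm
        _ = ∑ y : Fin 3, ∑ z : Fin 3, p (Equiv.swap x x' x) (Equiv.swap x x' y) z :=
            Finset.sum_congr rfl fun y _ =>
              Equiv.sum_comp (Equiv.swap x x') (fun z => p (Equiv.swap x x' x) (Equiv.swap x x' y) z)
        _ = ∑ y : Fin 3, ∑ z : Fin 3, p (Equiv.swap x x' x) y z :=
            Equiv.sum_comp (Equiv.swap x x') (fun y => ∑ z : Fin 3, p (Equiv.swap x x' x) y z)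
        _ = ∑ y : Fin 3, ∑ z : Fin 3, p x' y z := by rw [Equiv.swap_apply_left]
    intro x
    have h3 : (3:ℝ) * (∑ y : Fin 3, ∑ z : Fin 3, p x y z) = 1 := by
      rw [← tot]
      rw [Finset.sum_congr rfl fun x' (_ : x' ∈ Finset.univ) => eqm x' x]
      rw [Finset.sum_const, Finset.card_univ]
      simp [Fintype.card_fin]
    rw [mX x] at h3
    linarith
  have uniY : ∀ y : Fin 3, ∑ t : ZMod 3, qC t * qA (-c0 - t - phi3 y) = 1/3 := by
    have eqm : ∀ y y' : Fin 3, (∑ x : Fin 3, ∑ z : Fin 3, p x y z)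
        = ∑ x : Fin 3, ∑ z : Fin 3, p x y' z := by
      intro y y'
      calc ∑ x : Fin 3, ∑ z : Fin 3, p x y z
          = ∑ x : Fin 3, ∑ z : Fin 3,
              p (Equiv.swap y y' x) (Equiv.swap y y' y) (Equiv.swap y y' z) :=
            Finset.sum_congr rfl fun x _ => Finset.sum_congr rfl fun z _ =>
              (houtcome (Equiv.swap y y') x y z).symm
        _ = ∑ x : Fin 3, ∑ z : Fin 3, p (Equiv.swap y y' x) (Equiv.swap y y' y) z :=
            Finset.sum_congr rfl fun x _ =>
              Equiv.sum_comp (Equiv.swap y y') (fun z => p (Equiv.swap y y' x) (Equiv.swap y y' y) z)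
        _ = ∑ x : Fin 3, ∑ z : Fin 3, p x (Equiv.swap y y' y) z :=
            Equiv.sum_comp (Equiv.swap y y') (fun x => ∑ z : Fin 3, p x (Equiv.swap y y' y) z)
        _ = ∑ x : Fin 3, ∑ z : Fin 3, p x y' z := by rw [Equiv.swap_apply_left]
    intro y
    have h3 : (3:ℝ) * (∑ x : Fin 3, ∑ z : Fin 3, p x y z) = 1 := by
      rw [← tot]
      have swap1 : ∑ x : Fin 3, ∑ y' : Fin 3, ∑ z : Fin 3, p x y' z
          = ∑ y' : Fin 3, ∑ x : Fin 3, ∑ z : Fin 3, p x y' z := Finset.sum_comm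
      rw [swap1]
      rw [Finset.sum_congr rfl fun y' (_ : y' ∈ Finset.univ) => eqm y' y]
      rw [Finset.sum_const, Finset.card_univ]
      simp [Fintype.card_fin]
    rw [mY y] at h3
    linarith
  have uniZ : ∀ z : Fin 3, ∑ t : ZMod 3, qB t * qA (phi3 z - c0 + t) = 1/3 := by
    have eqm : ∀ z z' : Fin 3, (∑ x : Fin 3, ∑ y : Fin 3, p x y z)
        = ∑ x : Fin 3, ∑ y : Fin 3, p x y z' := by
      intro z z'
      calc ∑ x : Fin 3, ∑ y : Fin 3, p x y z
          = ∑ x : Fin 3, ∑ y : Fin 3,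
              p (Equiv.swap z z' x) (Equiv.swap z z' y) (Equiv.swap z z' z) :=
            Finset.sum_congr rfl fun x _ => Finset.sum_congr rfl fun y _ =>
              (houtcome (Equiv.swap z z') x y z).symm
        _ = ∑ x : Fin 3, ∑ y : Fin 3, p (Equiv.swap z z' x) y (Equiv.swap z z' z) :=
            Finset.sum_congr rfl fun x _ =>
              Equiv.sum_comp (Equiv.swap z z') (fun y => p (Equiv.swap z z' x) y (Equiv.swap z z' z))
        _ = ∑ x : Fin 3, ∑ y : Fin 3, p x y (Equiv.swap z z' z) :=
            Equiv.sum_comp (Equiv.swap z z') (fun x => ∑ y : Fin 3, p x y (Equiv.swap z z' z))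
        _ = ∑ x : Fin 3, ∑ y : Fin 3, p x y z' := by rw [Equiv.swap_apply_left]
    intro z
    have h3 : (3:ℝ) * (∑ x : Fin 3, ∑ y : Fin 3, p x y z) = 1 := by
      rw [← tot]
      have swap1 : ∑ x : Fin 3, ∑ y : Fin 3, ∑ z' : Fin 3, p x y z'
          = ∑ z' : Fin 3, ∑ x : Fin 3, ∑ y : Fin 3, p x y z' := by
        calc ∑ x : Fin 3, ∑ y : Fin 3, ∑ z' : Fin 3, p x y z'
            = ∑ x : Fin 3, ∑ z' : Fin 3, ∑ y : Fin 3, p x y z' :=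
              Finset.sum_congr rfl fun x _ => Finset.sum_comm
          _ = ∑ z' : Fin 3, ∑ x : Fin 3, ∑ y : Fin 3, p x y z' := Finset.sum_comm
      rw [swap1]
      rw [Finset.sum_congr rfl fun z' (_ : z' ∈ Finset.univ) => eqm z' z]
      rw [Finset.sum_const, Finset.card_univ]
      simp [Fintype.card_fin]
    rw [mZ z] at h3
    linarith
  -- convolution equations
  have E1 : ∀ j : ZMod 3, ∑ t : ZMod 3, qC t * qB (j - t) = 1/3 := by
    intro j
    have h := uniX (psi3 j)
    rw [phi_psi] at h
    exact h
  have E2 : ∀ j : ZMod 3, ∑ t : ZMod 3, qC t * qA (j - t) = 1/3 := by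
    intro j
    have h := uniY (psi3 (-c0 - j))
    rw [phi_psi] at h
    calc ∑ t : ZMod 3, qC t * qA (j - t)
        = ∑ t : ZMod 3, qC t * qA (-c0 - t - (-c0 - j)) := by
          refine Finset.sum_congr rfl fun t _ => ?_
          have e : -c0 - t - (-c0 - j) = j - t := by ring
          rw [e]
      _ = 1/3 := h
  have E3 : ∀ j : ZMod 3, ∑ t : ZMod 3, qB t * qA (j + t) = 1/3 := by
    intro j
    have h := uniZ (psi3 (j + c0))
    rw [phi_psi] at h
    calc ∑ t : ZMod 3, qB t * qA (j + t)
        = ∑ t : ZMod 3, qB t * qA (j + c0 - c0 + t) := by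
          refine Finset.sum_congr rfl fun t _ => ?_
          have e : j + c0 - c0 + t = j + t := by ring
          rw [e]
      _ = 1/3 := h
  -- expand the convolution equations into components
  have d10 := E1 0
  have d11 := E1 1
  have d12 := E1 2
  rw [sum3] at d10 d11 d12
  rw [show ((0:ZMod 3) - 0) = 0 from by decide, show ((0:ZMod 3) - 1) = 2 from by decide,
    show ((0:ZMod 3) - 2) = 1 from by decide] at d10
  rw [show ((1:ZMod 3) - 0) = 1 from by decide, show ((1:ZMod 3) - 1) = 0 from by decide,
    show ((1:ZMod 3) - 2) = 2 from by decide] at d11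
  rw [show ((2:ZMod 3) - 0) = 2 from by decide, show ((2:ZMod 3) - 1) = 1 from by decide,
    show ((2:ZMod 3) - 2) = 0 from by decide] at d12
  have d20 := E2 0
  have d21 := E2 1
  have d22 := E2 2
  rw [sum3] at d20 d21 d22
  rw [show ((0:ZMod 3) - 0) = 0 from by decide, show ((0:ZMod 3) - 1) = 2 from by decide,
    show ((0:ZMod 3) - 2) = 1 from by decide] at d20
  rw [show ((1:ZMod 3) - 0) = 1 from by decide, show ((1:ZMod 3) - 1) = 0 from by decide,
    show ((1:ZMod 3) - 2) = 2 from by decide] at d21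
  rw [show ((2:ZMod 3) - 0) = 2 from by decide, show ((2:ZMod 3) - 1) = 1 from by decide,
    show ((2:ZMod 3) - 2) = 0 from by decide] at d22
  have d30 := E3 0
  have d31 := E3 1
  have d32 := E3 2
  rw [sum3] at d30 d31 d32
  rw [show ((0:ZMod 3) + 0) = 0 from by decide, show ((0:ZMod 3) + 1) = 1 from by decide,
    show ((0:ZMod 3) + 2) = 2 from by decide] at d30
  rw [show ((1:ZMod 3) + 0) = 1 from by decide, show ((1:ZMod 3) + 1) = 2 from by decide,
    show ((1:ZMod 3) + 2) = 0 from by decide] at d31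
  rw [show ((2:ZMod 3) + 0) = 2 from by decide, show ((2:ZMod 3) + 1) = 0 from by decide,
    show ((2:ZMod 3) + 2) = 1 from by decide] at d32
  have conv1 := conv_unif (qC 0) (qC 1) (qC 2) (qB 0) (qB 1) (qB 2) hqCs hqBs d10 d11 d12
  have conv2 := conv_unif (qC 0) (qC 1) (qC 2) (qA 0) (qA 1) (qA 2) hqCs hqAs d20 d21 d22
  have conv3 := conv_unif (qA 0) (qA 1) (qA 2) (qB 0) (qB 2) (qB 1) hqAs (by linarith)
    (by linear_combination d30) (by linear_combination d31) (by linear_combination d32)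
  have mkA : (qA 0 = 1/3 ∧ qA 1 = 1/3 ∧ qA 2 = 1/3) → ∀ s, qA s = 1/3 := by
    rintro ⟨u0, u1, u2⟩ s
    rcases cases3 s with h | h | h <;> rw [h] <;> assumption
  have mkB : (qB 0 = 1/3 ∧ qB 1 = 1/3 ∧ qB 2 = 1/3) → ∀ s, qB s = 1/3 := by
    rintro ⟨u0, u1, u2⟩ s
    rcases cases3 s with h | h | h <;> rw [h] <;> assumption
  have mkB' : (qB 0 = 1/3 ∧ qB 2 = 1/3 ∧ qB 1 = 1/3) → ∀ s, qB s = 1/3 := by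
    rintro ⟨u0, u2, u1⟩ s
    rcases cases3 s with h | h | h <;> rw [h] <;> assumption
  have mkC : (qC 0 = 1/3 ∧ qC 1 = 1/3 ∧ qC 2 = 1/3) → ∀ s, qC s = 1/3 := by
    rintro ⟨u0, u1, u2⟩ s
    rcases cases3 s with h | h | h <;> rw [h] <;> assumption
  -- rewrite the goal via hdiag
  rw [Finset.sum_congr rfl fun k (_ : k ∈ Finset.univ) => hdiag k]
  have finish9 : (∀ k : Fin 3, ∑ t : ZMod 3,
      qC t * (qB (phi3 k - t) * qA (-c0 - t - phi3 k)) = 1/3 * (1/3)) →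
      ∑ k : Fin 3, ∑ t : ZMod 3, qC t * (qB (phi3 k - t) * qA (-c0 - t - phi3 k)) = 1/3 := by
    intro hin
    rw [Finset.sum_congr rfl fun k (_ : k ∈ Finset.univ) => hin k]
    rw [Finset.sum_const, Finset.card_univ]
    simp [Fintype.card_fin]
  -- three finishing cases
  have finBC : (∀ s, qB s = 1/3) → (∀ s, qC s = 1/3) →
      ∑ k : Fin 3, ∑ t : ZMod 3, qC t * (qB (phi3 k - t) * qA (-c0 - t - phi3 k)) = 1/3 := by
    intro uB uC
    refine finish9 fun k => ?_
    have e : ∑ t : ZMod 3, qA (-c0 - phi3 k - t) = 1 := by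
      calc ∑ t : ZMod 3, qA (-c0 - phi3 k - t)
          = ∑ t : ZMod 3, qA ((Equiv.subLeft (-c0 - phi3 k)) t) :=
            Finset.sum_congr rfl fun t _ => by rw [Equiv.subLeft_apply]
        _ = ∑ t : ZMod 3, qA t := Equiv.sum_comp _ qA
        _ = 1 := by rw [sum3]; exact hqAs
    calc ∑ t : ZMod 3, qC t * (qB (phi3 k - t) * qA (-c0 - t - phi3 k))
        = ∑ t : ZMod 3, 1/3 * (1/3) * qA (-c0 - phi3 k - t) := by
          refine Finset.sum_congr rfl fun t _ => ?_
          rw [uB, uC, show -c0 - t - phi3 k = -c0 - phi3 k - t from by ring]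
          ring
      _ = 1/3 * (1/3) * ∑ t : ZMod 3, qA (-c0 - phi3 k - t) := by rw [Finset.mul_sum]
      _ = 1/3 * (1/3) := by rw [e, mul_one]
  have finCA : (∀ s, qC s = 1/3) → (∀ s, qA s = 1/3) →
      ∑ k : Fin 3, ∑ t : ZMod 3, qC t * (qB (phi3 k - t) * qA (-c0 - t - phi3 k)) = 1/3 := by
    intro uC uA
    refine finish9 fun k => ?_
    have e : ∑ t : ZMod 3, qB (phi3 k - t) = 1 := by
      calc ∑ t : ZMod 3, qB (phi3 k - t)
          = ∑ t : ZMod 3, qB ((Equiv.subLeft (phi3 k)) t) :=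
            Finset.sum_congr rfl fun t _ => by rw [Equiv.subLeft_apply]
        _ = ∑ t : ZMod 3, qB t := Equiv.sum_comp _ qB
        _ = 1 := by rw [sum3]; exact hqBs
    calc ∑ t : ZMod 3, qC t * (qB (phi3 k - t) * qA (-c0 - t - phi3 k))
        = ∑ t : ZMod 3, 1/3 * (1/3) * qB (phi3 k - t) := by
          refine Finset.sum_congr rfl fun t _ => ?_
          rw [uC, uA]
          ring
      _ = 1/3 * (1/3) * ∑ t : ZMod 3, qB (phi3 k - t) := by rw [Finset.mul_sum]
      _ = 1/3 * (1/3) := by rw [e, mul_one]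
  have finAB : (∀ s, qA s = 1/3) → (∀ s, qB s = 1/3) →
      ∑ k : Fin 3, ∑ t : ZMod 3, qC t * (qB (phi3 k - t) * qA (-c0 - t - phi3 k)) = 1/3 := by
    intro uA uB
    refine finish9 fun k => ?_
    have e : ∑ t : ZMod 3, qC t = 1 := by rw [sum3]; exact hqCs
    calc ∑ t : ZMod 3, qC t * (qB (phi3 k - t) * qA (-c0 - t - phi3 k))
        = ∑ t : ZMod 3, qC t * (1/3 * (1/3)) := by
          refine Finset.sum_congr rfl fun t _ => ?_
          rw [uA, uB]
      _ = (∑ t : ZMod 3, qC t) * (1/3 * (1/3)) := by rw [Finset.sum_mul]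
      _ = 1/3 * (1/3) := by rw [e, one_mul]
  rcases conv1 with hC | hB
  · rcases conv3 with hA | hB'
    · exact finCA (mkC hC) (mkA hA)
    · exact finBC (mkB' hB') (mkC hC)
  · rcases conv2 with hC | hA
    · exact finBC (mkB hB) (mkC hC)
    · exact finAB (mkA hA) (mkB hB)
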